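/- Let θ be irrational and badly approximable, i.e. there is κ > 0 with |nθ − m| ≥ κ/n for all integers m, n with n > 0. Let m/n be a continued fraction convergent of θ (so |nθ − m| < 1/n), with n ≥ 128/κ. Define j > n to be n-irregular if γ(j) ≠ γ(j−n), where γ(j) ∈ Γ₀ depends on which arc (k/8,(k+1)/8) mod 1 contains jθ as above. Then every n-irregular index j satisfies j − n > κn/128. -/

import Mathlib

open Complex

set_option maxHeartbeats 1000000

/-- The finite set Γ₀ = {-2, 2i, -2i, 1+2i, 1-2i}. -/
noncomputable def Gamma0 : Finset ℂ :=
  {-2, 2 * I, -2 * I, 1 + 2 * I, 1 - 2 * I}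

/-- γ(j) is the element of Γ₀ maximizing Re(γ·e^{2πijθ}). -/
def IsGammaSeq (θ : ℝ) (γ : ℕ → ℂ) : Prop :=
  ∀ j : ℕ, 1 ≤ j → γ j ∈ Gamma0 ∧
    ∀ γ' ∈ Gamma0, (γ' * Complex.exp (2 * Real.pi * θ * j * I)).re ≤
      (γ j * Complex.exp (2 * Real.pi * θ * j * I)).re

noncomputable def Fg (γ : ℂ) (x : ℝ) : ℝ := (γ * Complex.exp (2 * Real.pi * x * I)).re

lemma Fg_eq (γ : ℂ) (x : ℝ) :
    Fg γ x = γ.re * Real.cos (2*Real.pi*x) - γ.im * Real.sin (2*Real.pi*x) := by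
  unfold Fg
  have h2 : Complex.exp (2 * (Real.pi:ℂ) * (x:ℝ) * I)
      = (Real.cos (2*Real.pi*x) : ℝ) + (Real.sin (2*Real.pi*x) : ℝ) * I := by
    rw [show (2 * (Real.pi:ℂ) * (x:ℝ) * I) = ((2*Real.pi*x : ℝ) : ℂ) * I by push_cast; ring,
      Complex.exp_mul_I, ← Complex.ofReal_cos, ← Complex.ofReal_sin]
  rw [h2]
  simp only [Complex.add_re, Complex.add_im, Complex.mul_re, Complex.mul_im, Complex.ofReal_re,
    Complex.ofReal_im, Complex.I_re, Complex.I_im]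
  ring

lemma Fg_int_add (γ : ℂ) (x : ℝ) (p : ℤ) : Fg γ (x + p) = Fg γ x := by
  unfold Fg
  have h : (2 * (Real.pi:ℂ) * ((x:ℝ) + (p:ℤ) : ℝ) * I) = 2*(Real.pi:ℂ)*x*I + p*(2*(Real.pi:ℂ)*I) := by
    push_cast; ring
  rw [h, Complex.exp_add, Complex.exp_int_mul_two_pi_mul_I, mul_one]

noncomputable def gam (e : ℕ) : ℂ :=
  if e ≤ 1 then 1 - 2*I else if e = 2 then -2*I else if e ≤ 4 then -2
  else if e = 5 then 2*I else 1 + 2*I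

lemma gam_mem (e : ℕ) : gam e ∈ Gamma0 := by
  unfold gam; split_ifs <;> simp [Gamma0]

lemma strictMax (e : ℕ) (he : e < 8) (x : ℝ) (h1 : (e:ℝ)/8 < x) (h2 : x < ((e:ℝ)+1)/8)
    (γ' : ℂ) (hγ' : γ' ∈ Gamma0) (hne : γ' ≠ gam e) : Fg γ' x < Fg (gam e) x := by
  have hπ := Real.pi_pos
  have hφl : (e:ℝ) * (Real.pi/4) < 2*Real.pi*x := by nlinarith
  have hφu : 2*Real.pi*x < ((e:ℝ)+1) * (Real.pi/4) := by nlinarith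
  set φ := 2*Real.pi*x with hφdef
  simp only [Gamma0, Finset.mem_insert, Finset.mem_singleton] at hγ'
  interval_cases e
  · -- e = 0 : φ ∈ (0, π/4), max 1-2I : c+2s
    norm_num at hφl hφu ⊢
    have hs : 0 < Real.sin φ := Real.sin_pos_of_pos_of_lt_pi hφl (by nlinarith)
    have hc : 0 < Real.cos φ := Real.cos_pos_of_mem_Ioo ⟨by nlinarith, by nlinarith⟩
    rcases hγ' with rfl|rfl|rfl|rfl|rfl <;>
      rw [Fg_eq, Fg_eq] <;> simp only [gam] at hne ⊢ <;> norm_num at hne <;> norm_num <;> linarith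
  · -- e = 1 : φ ∈ (π/4, π/2), max 1-2I
    norm_num at hφl hφu ⊢
    have hs : 0 < Real.sin φ := Real.sin_pos_of_pos_of_lt_pi (by nlinarith) (by nlinarith)
    have hc : 0 < Real.cos φ := Real.cos_pos_of_mem_Ioo ⟨by nlinarith, by nlinarith⟩
    rcases hγ' with rfl|rfl|rfl|rfl|rfl <;>
      rw [Fg_eq, Fg_eq] <;> simp only [gam] at hne ⊢ <;> norm_num at hne <;> norm_num <;> linarith
  · -- e = 2 : φ ∈ (π/2, 3π/4), max -2I : 2s
    norm_num at hφl hφu ⊢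
    have hs : 0 < Real.sin φ := Real.sin_pos_of_pos_of_lt_pi (by nlinarith) (by nlinarith)
    have hc : Real.cos φ < 0 := Real.cos_neg_of_pi_div_two_lt_of_lt (by nlinarith) (by nlinarith)
    have hcs : 0 < Real.cos φ + Real.sin φ := by
      have h := Real.cos_lt_cos_of_nonneg_of_le_pi (x := φ - Real.pi/2) (y := Real.pi - φ)
        (by nlinarith) (by nlinarith) (by nlinarith)
      rw [Real.cos_pi_sub, Real.cos_sub_pi_div_two] at h
      linarith
    rcases hγ' with rfl|rfl|rfl|rfl|rfl <;>
      rw [Fg_eq, Fg_eq] <;> simp only [gam] at hne ⊢ <;> norm_num at hne <;> norm_num <;> linarith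
  · -- e = 3 : φ ∈ (3π/4, π), max -2 : -2c
    norm_num at hφl hφu ⊢
    have hs : 0 < Real.sin φ := Real.sin_pos_of_pos_of_lt_pi (by nlinarith) (by nlinarith)
    have hc : Real.cos φ < 0 := Real.cos_neg_of_pi_div_two_lt_of_lt (by nlinarith) (by nlinarith)
    have hcs : Real.cos φ + Real.sin φ < 0 := by
      have h := Real.cos_lt_cos_of_nonneg_of_le_pi (x := Real.pi - φ) (y := φ - Real.pi/2)
        (by nlinarith) (by nlinarith) (by nlinarith)
      rw [Real.cos_pi_sub, Real.cos_sub_pi_div_two] at h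
      linarith
    rcases hγ' with rfl|rfl|rfl|rfl|rfl <;>
      rw [Fg_eq, Fg_eq] <;> simp only [gam] at hne ⊢ <;> norm_num at hne <;> norm_num <;> linarith
  · -- e = 4 : φ ∈ (π, 5π/4), max -2
    norm_num at hφl hφu ⊢
    have hsψ : 0 < Real.sin (φ - Real.pi) := Real.sin_pos_of_pos_of_lt_pi (by nlinarith) (by nlinarith)
    have hcψ : 0 < Real.cos (φ - Real.pi) := Real.cos_pos_of_mem_Ioo ⟨by nlinarith, by nlinarith⟩
    have hs : Real.sin φ < 0 := by have := Real.sin_sub_pi φ; linarith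
    have hc : Real.cos φ < 0 := by have := Real.cos_sub_pi φ; linarith
    have hsc : Real.cos φ < Real.sin φ := by
      have h := Real.cos_lt_cos_of_nonneg_of_le_pi (x := φ - Real.pi) (y := Real.pi/2 - (φ - Real.pi))
        (by nlinarith) (by nlinarith) (by nlinarith)
      rw [Real.cos_pi_div_two_sub, Real.sin_sub_pi, Real.cos_sub_pi] at h
      linarith
    rcases hγ' with rfl|rfl|rfl|rfl|rfl <;>
      rw [Fg_eq, Fg_eq] <;> simp only [gam] at hne ⊢ <;> norm_num at hne <;> norm_num <;> linarith
  · -- e = 5 : φ ∈ (5π/4, 3π/2), max 2I : -2s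
    norm_num at hφl hφu ⊢
    have hsψ : 0 < Real.sin (φ - Real.pi) := Real.sin_pos_of_pos_of_lt_pi (by nlinarith) (by nlinarith)
    have hcψ : 0 < Real.cos (φ - Real.pi) := Real.cos_pos_of_mem_Ioo ⟨by nlinarith, by nlinarith⟩
    have hs : Real.sin φ < 0 := by have := Real.sin_sub_pi φ; linarith
    have hc : Real.cos φ < 0 := by have := Real.cos_sub_pi φ; linarith
    have hsc : Real.sin φ < Real.cos φ := by
      have h := Real.cos_lt_cos_of_nonneg_of_le_pi (x := Real.pi/2 - (φ - Real.pi)) (y := φ - Real.pi)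
        (by nlinarith) (by nlinarith) (by nlinarith)
      rw [Real.cos_pi_div_two_sub, Real.sin_sub_pi, Real.cos_sub_pi] at h
      linarith
    rcases hγ' with rfl|rfl|rfl|rfl|rfl <;>
      rw [Fg_eq, Fg_eq] <;> simp only [gam] at hne ⊢ <;> norm_num at hne <;> norm_num <;> linarith
  · -- e = 6 : φ ∈ (3π/2, 7π/4), max 1+2I : c-2s
    norm_num at hφl hφu ⊢
    have hsψ : 0 < Real.sin (φ - Real.pi) := Real.sin_pos_of_pos_of_lt_pi (by nlinarith) (by nlinarith)
    have hcψ : Real.cos (φ - Real.pi) < 0 := Real.cos_neg_of_pi_div_two_lt_of_lt (by nlinarith) (by nlinarith)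
    have hs : Real.sin φ < 0 := by have := Real.sin_sub_pi φ; linarith
    have hc : 0 < Real.cos φ := by have := Real.cos_sub_pi φ; linarith
    rcases hγ' with rfl|rfl|rfl|rfl|rfl <;>
      rw [Fg_eq, Fg_eq] <;> simp only [gam] at hne ⊢ <;> norm_num at hne <;> norm_num <;> linarith
  · -- e = 7 : φ ∈ (7π/4, 2π), max 1+2I
    norm_num at hφl hφu ⊢
    have hsψ : 0 < Real.sin (φ - Real.pi) := Real.sin_pos_of_pos_of_lt_pi (by nlinarith) (by nlinarith)
    have hcψ : Real.cos (φ - Real.pi) < 0 := Real.cos_neg_of_pi_div_two_lt_of_lt (by nlinarith) (by nlinarith)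
    have hs : Real.sin φ < 0 := by have := Real.sin_sub_pi φ; linarith
    have hc : 0 < Real.cos φ := by have := Real.cos_sub_pi φ; linarith
    rcases hγ' with rfl|rfl|rfl|rfl|rfl <;>
      rw [Fg_eq, Fg_eq] <;> simp only [gam] at hne ⊢ <;> norm_num at hne <;> norm_num <;> linarith

lemma isGammaSeq_Fg {θ : ℝ} {γ : ℕ → ℂ} (h : IsGammaSeq θ γ) (i : ℕ) (hi : 1 ≤ i) :
    γ i ∈ Gamma0 ∧ ∀ γ' ∈ Gamma0, Fg γ' (θ * i) ≤ Fg (γ i) (θ * i) := by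
  have h2 : ∀ g : ℂ, (g * Complex.exp (2 * Real.pi * θ * i * I)).re = Fg g (θ * i) := by
    intro g; unfold Fg
    rw [show (2 * (Real.pi:ℂ) * θ * i * I) = 2*(Real.pi:ℂ)*((θ * i : ℝ):ℂ)*I by push_cast; ring]
  obtain ⟨h3, h4⟩ := h i hi
  exact ⟨h3, fun γ' hγ' => by rw [← h2, ← h2]; exact h4 γ' hγ'⟩

/-- If θ is badly approximable with constant κ, m/n is a continued fraction
convergent of θ with n ≥ 128/κ, then every n-irregular index j satisfies
j − n > κn/128. -/
theorem irregular_far_from_n (θ : ℝ) (hθ : θ ∈ Set.Ioo (0 : ℝ) 1) (hirr : Irrational θ)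
    (κ : ℝ) (hκ : 0 < κ)
    (hbad : ∀ (m : ℤ) (q : ℕ), 0 < q → κ / q ≤ |(q : ℝ) * θ - m|)
    (m : ℤ) (n : ℕ) (hn : 0 < n) (hcop : Int.gcd m n = 1)
    (hconv : |(n : ℝ) * θ - m| < 1 / n) (hlarge : 128 / κ ≤ (n : ℝ))
    (γ : ℕ → ℂ) (hγ : IsGammaSeq θ γ) :
    ∀ j : ℕ, n < j → γ j ≠ γ (j - n) → κ * n / 128 < (j : ℝ) - n := by
  intro j hj hne
  by_contra hle
  push_neg at hle
  set r := j - n with hrdef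
  have hr1 : 1 ≤ r := by omega
  have hjr : r + n = j := by omega
  have hnR : (0:ℝ) < n := by exact_mod_cast hn
  have hrR : (0:ℝ) < r := by exact_mod_cast hr1
  set u : ℝ := ((n:ℝ))⁻¹ with hudef
  have hu : 0 < u := by positivity
  have hun : (n:ℝ) * u = 1 := mul_inv_cancel₀ (ne_of_gt hnR)
  have hrcast : (r:ℝ) = (j:ℝ) - n := by
    have : ((r:ℕ):ℝ) + n = j := by exact_mod_cast congrArg (Nat.cast (R := ℝ)) hjr
    linarith
  have hrle : 128 * (r:ℝ) ≤ κ * n := by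
    rw [hrcast]; linarith
  have hdist : ∀ k : ℤ, 2*u ≤ |θ * r - k/8| := by
    intro k
    have h8r : 0 < 8*r := by omega
    have hb := hbad k (8*r) h8r
    have h8rR : (0:ℝ) < ((8*r:ℕ):ℝ) := by exact_mod_cast h8r
    have heq : |((8*r:ℕ):ℝ) * θ - k| = 8 * |θ * r - k/8| := by
      rw [show ((8*r:ℕ):ℝ) * θ - k = 8 * (θ * r - k/8) by push_cast; ring, abs_mul]
      norm_num
    have h2 : 16 * u ≤ κ / ((8*r:ℕ):ℝ) := by
      rw [le_div_iff₀ h8rR]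
      have h3 := mul_le_mul_of_nonneg_right hrle hu.le
      have h4 : κ * n * u = κ := by rw [mul_assoc, hun, mul_one]
      push_cast
      nlinarith [h3, h4]
    have h5 := le_trans h2 hb
    rw [heq] at h5
    linarith
  set a := θ * r with hadef
  set δ := (n:ℝ) * θ - m with hδdef
  have hδ : |δ| < u := by rw [hudef, ← one_div]; exact hconv
  have hδ' : -u < δ ∧ δ < u := abs_lt.mp hδ
  set b := a + δ with hbdef
  have hbj : θ * j = b + m := by
    rw [hbdef, hadef, hδdef, ← hjr]; push_cast; ring
  set K := ⌊8 * a⌋ with hKdef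
  have hK1 : (K:ℝ) ≤ 8*a := Int.floor_le _
  have hK2 : 8*a < K + 1 := Int.lt_floor_add_one _
  have hdK := hdist K
  have hdK1 := hdist (K+1)
  have haK : (K:ℝ)/8 + 2*u ≤ a := by
    have h0 : (0:ℝ) ≤ a - K/8 := by linarith
    rw [_root_.abs_of_nonneg h0] at hdK; linarith
  have haK1 : a ≤ ((K:ℝ)+1)/8 - 2*u := by
    have h0 : a - ((K+1:ℤ):ℝ)/8 ≤ 0 := by push_cast; linarith
    rw [abs_of_nonpos h0] at hdK1; push_cast at hdK1; linarith
  have hbK : (K:ℝ)/8 < b ∧ b < ((K:ℝ)+1)/8 := by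
    constructor
    · rw [hbdef]; linarith [hδ'.1]
    · rw [hbdef]; linarith [hδ'.2]
  set p : ℤ := K / 8 with hpdef
  set eZ : ℤ := K % 8 with heZdef
  have heZ0 : 0 ≤ eZ := by omega
  have heZ8 : eZ < 8 := by omega
  have hKpe : K = 8 * p + eZ := by omega
  set e : ℕ := eZ.toNat with hedef
  have he : e < 8 := by omega
  have heR : ((e:ℕ):ℝ) = ((eZ:ℤ):ℝ) := by
    exact_mod_cast congrArg (Int.cast : ℤ → ℝ) (Int.toNat_of_nonneg heZ0)
  have hKR : (K:ℝ) = 8*(p:ℝ) + (e:ℝ) := by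
    rw [heR]; exact_mod_cast congrArg (Int.cast : ℤ → ℝ) hKpe
  have hx1l : (e:ℝ)/8 < a - p := by linarith
  have hx1u : a - p < ((e:ℝ)+1)/8 := by linarith
  have hx2l : (e:ℝ)/8 < b - p := by linarith [hbK.1]
  have hx2u : b - p < ((e:ℝ)+1)/8 := by linarith [hbK.2]
  have hmax_a : ∀ γ'' ∈ Gamma0, γ'' ≠ gam e → Fg γ'' a < Fg (gam e) a := by
    intro γ'' hm hne'
    have h := strictMax e he (a - p) hx1l hx1u γ'' hm hne'
    have e1 : ∀ g : ℂ, Fg g a = Fg g (a - p) := by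
      intro g
      have h' := Fg_int_add g (a - (p:ℝ)) p
      rw [sub_add_cancel] at h'
      exact h'
    rw [e1, e1]; exact h
  have hmax_b : ∀ γ'' ∈ Gamma0, γ'' ≠ gam e → Fg γ'' (θ * j) < Fg (gam e) (θ * j) := by
    intro γ'' hm hne'
    have h := strictMax e he (b - p) hx2l hx2u γ'' hm hne'
    have e1 : ∀ g : ℂ, Fg g (θ * j) = Fg g (b - p) := by
      intro g
      have h' := Fg_int_add g (b - (p:ℝ)) (p + m)
      rw [show (b - (p:ℝ)) + ((p + m : ℤ):ℝ) = θ * j by rw [hbj]; push_cast; ring] at h'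
      exact h'
    rw [e1, e1]; exact h
  have hγr : γ r = gam e := by
    by_contra hner
    obtain ⟨hmem, hmax⟩ := isGammaSeq_Fg hγ r hr1
    have h1 := hmax_a (γ r) hmem hner
    have h2 := hmax (gam e) (gam_mem e)
    rw [← hadef] at h2
    exact absurd (lt_of_le_of_lt h2 h1) (lt_irrefl _)
  have hγj : γ j = gam e := by
    by_contra hnej
    have hj1 : 1 ≤ j := by omega
    obtain ⟨hmem, hmax⟩ := isGammaSeq_Fg hγ j hj1
    have h1 := hmax_b (γ j) hmem hnej
    have h2 := hmax (gam e) (gam_mem e)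
    exact absurd (lt_of_le_of_lt h2 h1) (lt_irrefl _)
  exact hne (hγj.trans hγr.symm)
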